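/- For all integers 0 ≤ i ≤ d and 0 ≤ j ≤ e, Ψ(qbase(i,x,d)_q · qbase(j,x,e)_q) = (-1)^{d-i+e-j} q^{-C(d-i,2) + (d-i)(e-j) - C(e-j,2)} / ([d+e+1]_q · qbinom(d+e, d-i+j)_q). -/

import Mathlib

open Polynomial Finset

noncomputable section

/-- The field ℚ(q) of rational functions. -/
abbrev K : Type := RatFunc ℚ

/-- The variable q of ℚ(q). -/
def qq : K := RatFunc.X

/-- The q-integer [n]_t = (t^n - 1)/(t - 1), for n ∈ ℤ. -/
def qint (t : K) (n : ℤ) : K := (t ^ n - 1) / (t - 1)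

/-- The q-factorial [n]!_t. -/
def qfact (t : K) (n : ℕ) : K := ∏ i ∈ range n, qint t (i + 1)

/-- The generalized q-binomial qbinom(m, n)_t = [m]_t [m-1]_t ⋯ [m-n+1]_t / [n]!_t. -/
def qbinom (t : K) (m : ℤ) (n : ℕ) : K := (∏ i ∈ range n, qint t (m - i)) / qfact t n

/-- The q-binomial with the vanishing convention: 0 unless 0 ≤ n ≤ m. -/
def qbinomv (t : K) (m n : ℤ) : K :=
  if 0 ≤ n ∧ n ≤ m then (∏ i ∈ range n.toNat, qint t (m - i)) / qfact t n.toNat else 0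

/-- The polynomial [n, x]_t = [n]_t + t^n x. -/
def qb (t : K) (n : ℤ) : Polynomial K := C (qint t n) + C (t ^ n) * X

/-- The polynomial qbase(m, x, n)_t = [m-n+1,x]_t ⋯ [m,x]_t / [n]!_t. -/
def qbase (t : K) (m : ℤ) (n : ℕ) : Polynomial K :=
  (∏ i ∈ range n, qb t (m - n + 1 + i)) * C (qfact t n)⁻¹

/-- The linear form V: essentially (1/q) times the derivative at x = [-1]_q = -1/q. -/
def qV (E : Polynomial K) : K := (Polynomial.derivative E).eval (-qq⁻¹) / qq

/-- The defining property of the q-summation operator Σ: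
(ΣE)([n]_q) = Σ_{j=0}^n q^j E([j]_q) for all n ≥ 0. -/
def IsQSigma (S : Polynomial K →ₗ[K] Polynomial K) : Prop :=
  ∀ E : Polynomial K, ∀ n : ℕ,
    (S E).eval (qint qq n) = ∑ j ∈ range (n + 1), qq ^ j * E.eval (qint qq j)

lemma hq : qq ≠ 0 := RatFunc.X_ne_zero

lemma qq_pow_inj : Function.Injective (fun n : ℕ => qq ^ n) := by
  intro a b h
  simp only [qq, ← RatFunc.algebraMap_X (K := ℚ), ← map_pow] at h
  have := RatFunc.algebraMap_injective ℚ h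
  have := congrArg natDegree this
  simpa using this

lemma qq_pow_ne_one {n : ℕ} (hn : n ≠ 0) : qq ^ n ≠ 1 := by
  intro h
  have : qq ^ n = qq ^ 0 := by simpa using h
  exact hn (qq_pow_inj this)

lemma hq1 : qq - 1 ≠ 0 := by
  intro h
  have : qq ^ 1 = 1 := by simpa using sub_eq_zero.mp h
  exact qq_pow_ne_one one_ne_zero this

lemma qint_zero : qint qq 0 = 0 := by simp [qint]
lemma qint_one : qint qq 1 = 1 := by simp [qint, div_self hq1]

lemma qint_natCast (n : ℕ) : qint qq n = (qq ^ n - 1) / (qq - 1) := by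
  rw [qint, zpow_natCast]

lemma qint_nat_ne_zero {n : ℕ} (hn : n ≠ 0) : qint qq n ≠ 0 := by
  rw [qint_natCast]
  exact div_ne_zero (sub_ne_zero.mpr (qq_pow_ne_one hn)) hq1

lemma qint_add (m n : ℤ) : qint qq (m + n) = qint qq m + qq ^ m * qint qq n := by
  have h1 := hq1
  simp only [qint, zpow_add₀ hq]
  field_simp
  ring

lemma qint_add_nat (m n : ℕ) : qint qq ((m : ℤ) + n) = qint qq m + qq ^ m * qint qq n := by
  rw [qint_add, zpow_natCast]

lemma qint_neg_mul (n : ℕ) : qq ^ n * qint qq (-(n : ℤ)) = - qint qq n := by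
  have h1 := hq1
  have h2 : qq ^ n ≠ 0 := pow_ne_zero _ hq
  rw [qint, qint_natCast, zpow_neg, zpow_natCast]
  field_simp
  ring

lemma qfact_ne_zero (n : ℕ) : qfact qq n ≠ 0 := by
  unfold qfact
  apply prod_ne_zero_iff.mpr
  intro i _
  exact_mod_cast qint_nat_ne_zero (Nat.succ_ne_zero i)

lemma qfact_succ (n : ℕ) : qfact qq (n + 1) = qfact qq n * qint qq (n + 1) := by
  unfold qfact
  rw [prod_range_succ]

lemma qint_nat_inj : Function.Injective (fun k : ℕ => qint qq k) := by
  intro a b h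
  simp only [qint_natCast, div_eq_div_iff hq1 hq1] at h
  have : qq ^ a = qq ^ b := by
    have := mul_right_cancel₀ hq1 h
    linear_combination this
  exact qq_pow_inj this

lemma qV_smul (a : K) (E : Polynomial K) : qV (a • E) = a * qV E := by
  unfold qV
  rw [derivative_smul, eval_smul, smul_eq_mul, mul_div_assoc]

lemma qV_add (E F : Polynomial K) : qV (E + F) = qV E + qV F := by
  unfold qV
  rw [derivative_add, eval_add, add_div]

lemma qV_sub (E F : Polynomial K) : qV (E - F) = qV E - qV F := by
  unfold qV
  rw [derivative_sub, eval_sub, sub_div]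

lemma qb_eval_qint (c : ℤ) (k : ℕ) : (qb qq c).eval (qint qq k) = qint qq (c + k) := by
  rw [qb, qint_add]
  simp

lemma qb_eval_neg (c : ℤ) : (qb qq c).eval (-qq⁻¹) = qint qq (c - 1) := by
  have h : qint qq c = qint qq (c - 1) + qq ^ (c - 1) * qint qq 1 := by
    rw [← qint_add]; norm_num
  rw [qb]
  simp only [eval_add, eval_mul, eval_C, eval_X, h, qint_one, mul_one]
  have h2 : qq ^ c * (-qq⁻¹) = -qq ^ (c - 1) := by
    rw [zpow_sub₀ hq, zpow_one]
    field_simp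
  rw [h2]; ring

lemma poly_eq_of_eval_qint {p p' : Polynomial K}
    (h : ∀ k : ℕ, p.eval (qint qq k) = p'.eval (qint qq k)) : p = p' := by
  apply Polynomial.eq_of_infinite_eval_eq
  apply Set.Infinite.mono (s := Set.range (fun k : ℕ => qint qq k))
  · rintro x ⟨k, rfl⟩
    exact h k
  · exact Set.infinite_range_of_injective qint_nat_inj

lemma derivative_finset_prod {ι : Type} [DecidableEq ι] (s : Finset ι) (f : ι → Polynomial K) :
    derivative (∏ i ∈ s, f i) = ∑ i ∈ s, (∏ j ∈ s.erase i, f j) * derivative (f i) := by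
  induction s using Finset.induction_on with
  | empty => simp
  | insert a s ha ih =>
    rw [prod_insert ha, derivative_mul, sum_insert ha, Finset.erase_insert ha, ih, mul_sum]
    have h : ∀ i ∈ s, (∏ j ∈ (insert a s).erase i, f j) * derivative (f i)
        = f a * ((∏ j ∈ s.erase i, f j) * derivative (f i)) := by
      intro b hb
      have hab : a ≠ b := by rintro rfl; exact ha hb
      rw [Finset.erase_insert_of_ne hab, prod_insert (fun hc => ha (Finset.erase_subset _ _ hc))]
      ring
    rw [Finset.sum_congr rfl h]
    ring

def qnum (m : ℤ) (n : ℕ) : Polynomial K := ∏ i ∈ range n, qb qq (m - n + 1 + i)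

lemma qbase_eq (m : ℤ) (n : ℕ) : qbase qq m n = (qfact qq n)⁻¹ • qnum m n := by
  rw [smul_eq_C_mul, mul_comm]; rfl

lemma qnum_top (m : ℤ) (n : ℕ) : qnum m (n + 1) = qb qq m * qnum (m - 1) n := by
  unfold qnum
  rw [prod_range_succ, mul_comm]
  congr 1
  · congr 1; push_cast; ring
  · apply Finset.prod_congr rfl; intro i _; congr 1; push_cast; ring

lemma qnum_bot (m : ℤ) (n : ℕ) : qnum m (n + 1) = qb qq (m - n) * qnum m n := by
  unfold qnum
  rw [prod_range_succ', mul_comm]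
  congr 1
  · congr 1; push_cast; ring
  · apply Finset.prod_congr rfl; intro i _; congr 1; push_cast; ring

lemma qint_succ_ne_zero (n : ℕ) : qint qq ((n : ℤ) + 1) ≠ 0 := by
  have := qint_nat_ne_zero (Nat.succ_ne_zero n)
  push_cast at this; exact this

lemma qfact_succ' (n : ℕ) : qfact qq (n + 1) = qfact qq n * qint qq ((n : ℤ) + 1) := by
  have := qfact_succ n
  push_cast at this ⊢; exact this

lemma qbase_top (m : ℤ) (n : ℕ) :
    qint qq ((n : ℤ) + 1) • qbase qq m (n + 1) = qb qq m * qbase qq (m - 1) n := by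
  rw [qbase_eq, qbase_eq, qnum_top, smul_smul, mul_smul_comm]
  congr 1
  rw [qfact_succ']
  have h1 := qfact_ne_zero n
  have h2 := qint_succ_ne_zero n
  field_simp

lemma qbase_bot (m : ℤ) (n : ℕ) :
    qint qq ((n : ℤ) + 1) • qbase qq m (n + 1) = qb qq (m - n) * qbase qq m n := by
  rw [qbase_eq, qbase_eq, qnum_bot, smul_smul, mul_smul_comm]
  congr 1
  rw [qfact_succ']
  have h1 := qfact_ne_zero n
  have h2 := qint_succ_ne_zero n
  field_simp

def qbn (M : ℤ) (n : ℕ) : K := (∏ r ∈ range n, qint qq (M - n + 1 + r)) * (qfact qq n)⁻¹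

lemma qbn_congr {M M' : ℤ} (n : ℕ) (h : M = M') : qbn M n = qbn M' n := by rw [h]

lemma qbase_eval (m : ℤ) (n k : ℕ) : (qbase qq m n).eval (qint qq k) = qbn (m + k) n := by
  rw [qbase_eq, eval_smul, qnum, eval_prod, smul_eq_mul, qbn, mul_comm]
  congr 1
  apply Finset.prod_congr rfl
  intro r _
  rw [qb_eval_qint]
  congr 1
  ring

lemma qbn_pascal (M : ℤ) (n : ℕ) :
    qbn M (n + 1) = qbn (M - 1) (n + 1) + qq ^ (M - n - 1) * qbn (M - 1) n := by
  have num1 : ∏ r ∈ range (n + 1), qint qq (M - (n + 1 : ℕ) + 1 + r)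
      = (∏ r ∈ range n, qint qq (M - n + r)) * qint qq M := by
    rw [prod_range_succ]
    congr 1
    · apply Finset.prod_congr rfl; intro r _; congr 1; push_cast; ring
    · congr 1; push_cast; ring
  have num2 : ∏ r ∈ range (n + 1), qint qq (M - 1 - (n + 1 : ℕ) + 1 + r)
      = qint qq (M - n - 1) * ∏ r ∈ range n, qint qq (M - n + r) := by
    rw [prod_range_succ', mul_comm]
    congr 1
    · congr 1; push_cast; ring
    · apply Finset.prod_congr rfl; intro r _; congr 1; push_cast; ring
  have num3 : ∏ r ∈ range n, qint qq (M - 1 - n + 1 + r)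
      = ∏ r ∈ range n, qint qq (M - n + r) := by
    apply Finset.prod_congr rfl; intro r _; congr 1; push_cast; ring
  have key : qint qq M = qint qq (M - n - 1) + qq ^ (M - n - 1) * qint qq ((n : ℤ) + 1) := by
    have := qint_add (M - n - 1) ((n : ℤ) + 1)
    rw [show M - ↑n - 1 + (↑n + 1) = M by ring] at this
    exact this
  unfold qbn
  rw [num1, num2, num3, key, qfact_succ']
  have h1 := qfact_ne_zero n
  have h2 := qint_succ_ne_zero n
  field_simp

lemma qbn_vanish (m n : ℕ) (h : m ≤ n) : qbn m (n + 1) = 0 := by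
  unfold qbn
  apply mul_eq_zero_of_left
  apply Finset.prod_eq_zero (i := n - m)
  · simp
  · have : ((m : ℤ) - (n + 1 : ℕ) + 1 + (n - m : ℕ)) = 0 := by
      push_cast [Nat.cast_sub h]; ring
    rw [this, qint_zero]

lemma zpow_nat_sub (n m : ℕ) (h : m ≤ n) : (qq : K) ^ (n - m) = qq ^ ((n : ℤ) - m) := by
  rw [← zpow_natCast]
  congr 1
  omega

lemma telesc (m n : ℕ) (h : m ≤ n) (k : ℕ) :
    (qq : K) ^ (n - m) * qbn ((m : ℤ) + 1 + k) (n + 1)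
      = ∑ r ∈ range (k + 1), qq ^ r * qbn ((m : ℤ) + r) n := by
  induction k with
  | zero =>
    rw [sum_range_one, zpow_nat_sub n m h]
    have hp := qbn_pascal ((m : ℤ) + 1) n
    rw [qbn_congr (n+1) (show (m:ℤ)+1+(0:ℕ) = (m:ℤ)+1 by push_cast; ring), hp]
    rw [show (m:ℤ) + 1 - 1 = (m:ℤ) by ring]
    have hv : qbn (m : ℤ) (n + 1) = 0 := by
      have := qbn_vanish m n h
      exact this
    rw [hv, zero_add, ← mul_assoc, ← zpow_add₀ hq]
    rw [show ((n:ℤ) - m) + ((m:ℤ) + 1 - n - 1) = 0 by ring, zpow_zero, one_mul]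
    simp
  | succ k ih =>
    rw [sum_range_succ, ← ih]
    have hp := qbn_pascal ((m : ℤ) + 1 + (k + 1 : ℕ)) n
    rw [hp]
    rw [qbn_congr (n+1) (show (m:ℤ) + 1 + (k+1:ℕ) - 1 = (m:ℤ)+1+(k:ℕ) by push_cast; ring)]
    rw [qbn_congr n (show (m:ℤ) + 1 + (k+1:ℕ) - 1 = (m:ℤ)+(k+1:ℕ) by push_cast; ring)]
    rw [mul_add]
    congr 1
    rw [← mul_assoc, zpow_nat_sub n m h, ← zpow_add₀ hq]
    rw [show ((n:ℤ) - m) + ((m:ℤ) + 1 + (k+1:ℕ) - n - 1) = ((k+1 : ℕ) : ℤ) by push_cast; ring]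
    rw [zpow_natCast]

lemma partA (S : Polynomial K →ₗ[K] Polynomial K) (hS : IsQSigma S) (m n : ℕ) (h : m ≤ n) :
    S (qbase qq m n) = qq ^ (n - m) • qbase qq ((m : ℤ) + 1) (n + 1) := by
  apply poly_eq_of_eval_qint
  intro k
  rw [hS, eval_smul, smul_eq_mul, qbase_eval]
  have hc : ∑ j ∈ range (k + 1), qq ^ j * eval (qint qq j) (qbase qq m n)
      = ∑ r ∈ range (k + 1), qq ^ r * qbn ((m : ℤ) + r) n := by
    apply Finset.sum_congr rfl
    intro r _
    rw [qbase_eval]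
  rw [hc, ← telesc m n h k]

lemma qb_derivative (c : ℤ) : derivative (qb qq c) = C (qq ^ c) := by
  simp [qb]

lemma sum_range_sub_choose (a : ℕ) : ∑ r ∈ range a, (a - r) = (a + 1).choose 2 := by
  induction a with
  | zero => simp
  | succ a ih =>
    rw [sum_range_succ]
    have h1 : ∑ r ∈ range a, (a + 1 - r) = (∑ r ∈ range a, (a - r)) + a := by
      have h2 : ∀ r ∈ range a, a + 1 - r = (a - r) + 1 := by
        intro r hr; simp at hr; omega
      rw [Finset.sum_congr rfl h2, Finset.sum_add_distrib]
      simp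
    have h3 : (a + 1 + 1).choose 2 = (a + 1).choose 2 + (a + 1) := by
      simp [Nat.choose_succ_succ, Nat.choose_one_right]
      omega
    omega

lemma partB_qV (i a : ℕ) :
    qV (qnum ((i : ℤ) + 1) (i + a + 1))
      = ∏ r ∈ (range (i + a + 1)).erase a, qint qq ((r : ℤ) - a) := by
  unfold qV qnum
  rw [derivative_finset_prod, eval_finset_sum]
  rw [Finset.sum_eq_single a
    (fun r hr hra => by
      rw [eval_mul, eval_prod]
      apply mul_eq_zero_of_left
      apply Finset.prod_eq_zero (i := a)
        (by simp only [Finset.mem_erase, Finset.mem_range]; exact ⟨Ne.symm hra, by omega⟩)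
      rw [qb_eval_neg, show ((i:ℤ)+1 - (i+a+1 : ℕ) + 1 + (a:ℤ) - 1) = 0 by push_cast; ring,
        qint_zero])
    (fun h => absurd (by simp only [Finset.mem_range]; omega) h)]
  rw [eval_mul, eval_prod, qb_derivative, eval_C]
  rw [show ((i:ℤ)+1 - (i+a+1 : ℕ) + 1 + (a:ℤ)) = 1 by push_cast; ring, zpow_one,
    mul_div_assoc, div_self hq, mul_one]
  apply Finset.prod_congr rfl
  intro j _
  rw [qb_eval_neg]
  congr 1
  push_cast
  ring

lemma erase_split (i a : ℕ) :
    (range (i + a + 1)).erase a = (range a) ∪ (Ico (a + 1) (i + a + 1)) := by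
  ext r
  simp only [Finset.mem_erase, Finset.mem_union, Finset.mem_range, Finset.mem_Ico]
  omega

lemma partB (i a : ℕ) :
    qq ^ ((a + 1).choose 2) * qV (qbase qq ((i : ℤ) + 1) (i + a + 1))
      = (-1) ^ a * qfact qq a * qfact qq i * (qfact qq (i + a + 1))⁻¹ := by
  rw [qbase_eq, qV_smul, partB_qV, erase_split,
    Finset.prod_union (by rw [Finset.disjoint_left]; intro r h1 h2; simp at h1 h2; omega)]
  have hP2 : ∏ r ∈ Ico (a+1) (i+a+1), qint qq ((r:ℤ) - a) = qfact qq i := by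
    rw [Finset.prod_Ico_eq_prod_range, show i + a + 1 - (a+1) = i by omega]
    apply Finset.prod_congr rfl
    intro t _
    congr 1
    push_cast
    ring
  have hP1 : qq ^ ((a + 1).choose 2) * ∏ r ∈ range a, qint qq ((r:ℤ) - a)
      = (-1)^a * qfact qq a := by
    rw [← sum_range_sub_choose, ← Finset.prod_pow_eq_pow_sum, ← Finset.prod_mul_distrib]
    have h2 : ∀ r ∈ range a, qq ^ (a - r) * qint qq ((r:ℤ) - a)
        = (-1) * qint qq ((a - r : ℕ)) := by
      intro r hr
      simp only [Finset.mem_range] at hr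
      have h1 := qint_neg_mul (a - r)
      rw [show (-((a-r:ℕ):ℤ)) = ((r:ℤ) - a) by push_cast [Nat.cast_sub (le_of_lt hr)]; ring] at h1
      rw [h1]
      ring
    rw [Finset.prod_congr rfl h2, Finset.prod_mul_distrib, Finset.prod_const, card_range]
    have h3 : ∏ r ∈ range a, qint qq ((a - r : ℕ)) = qfact qq a := by
      have h4 := prod_range_reflect (fun j => qint qq ((j:ℤ)+1)) a
      have h5 : ∀ r ∈ range a, qint qq ((a - r : ℕ)) = qint qq ((a - 1 - r : ℕ) + 1) := by
        intro r hr
        simp only [Finset.mem_range] at hr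
        congr 1
        push_cast [Nat.cast_sub (by omega : r ≤ a - 1), Nat.cast_sub (le_of_lt hr)]
        omega
      rw [Finset.prod_congr rfl h5]
      exact h4.trans rfl
    rw [h3]
  calc qq ^ ((a + 1).choose 2) * ((qfact qq (i+a+1))⁻¹ *
        ((∏ r ∈ range a, qint qq ((r:ℤ) - a)) * ∏ r ∈ Ico (a+1) (i+a+1), qint qq ((r:ℤ) - a)))
      = (qq ^ ((a + 1).choose 2) * ∏ r ∈ range a, qint qq ((r:ℤ) - a)) *
        (∏ r ∈ Ico (a+1) (i+a+1), qint qq ((r:ℤ) - a)) * (qfact qq (i+a+1))⁻¹ := by ring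
    _ = (-1) ^ a * qfact qq a * qfact qq i * (qfact qq (i + a + 1))⁻¹ := by
        rw [hP1, hP2]

lemma qbase_zero : qbase qq 0 0 = 1 := by
  unfold qbase qfact
  simp

lemma choose_succ_two (a : ℕ) : (a + 1).choose 2 = a.choose 2 + a := by
  rw [Nat.choose_succ_succ a 1, Nat.choose_one_right]
  show a + a.choose 2 = a.choose 2 + a
  omega

lemma anchor (S : Polynomial K →ₗ[K] Polynomial K) (hS : IsQSigma S) (i a : ℕ) :
    qq ^ (a.choose 2) * qV (S (qbase qq i (i + a)))
      = (-1) ^ a * qfact qq a * qfact qq i * (qfact qq (i + a + 1))⁻¹ := by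
  rw [partA S hS i (i + a) (by omega), qV_smul, show (i + a) - i = a by omega,
    ← mul_assoc, ← pow_add, show a.choose 2 + a = (a + 1).choose 2 by rw [choose_succ_two]]
  exact partB i a

lemma beta (b' : ℕ) : ((qq : K) ^ b') • qb qq (-(b' : ℤ)) = X - C (qint qq b') := by
  rw [qb, smul_eq_C_mul, mul_add, ← C_mul, ← mul_assoc, ← C_mul, qint_neg_mul b',
    show (qq : K) ^ b' * qq ^ (-(b' : ℤ)) = 1 by
      rw [← zpow_natCast, ← zpow_add₀ hq]; simp]
  rw [map_neg, C_1, one_mul]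
  ring

lemma gamma (i d : ℕ) : C (qq ^ (i + 1)) * X * qbase qq i d
    = C (qint qq ((d : ℤ) + 1)) * qbase qq ((i : ℤ) + 1) (d + 1)
      - C (qint qq ((i : ℤ) + 1)) * qbase qq i d := by
  have h := qbase_top ((i : ℤ) + 1) d
  rw [show (i : ℤ) + 1 - 1 = (i : ℤ) by ring] at h
  rw [smul_eq_C_mul] at h
  rw [h, qb, show (qq : K) ^ ((i : ℤ) + 1) = qq ^ (i + 1 : ℕ) by
    rw [← zpow_natCast]; norm_cast]
  ring

lemma PID1 (i j b' d : ℕ) :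
    (qq ^ (b' + i + 1) * qint qq ((j + b' : ℕ) + 1)) • (qbase qq i d * qbase qq j (j + b' + 1))
      = qint qq ((d : ℤ) + 1) • (qbase qq ((i : ℤ) + 1) (d + 1) * qbase qq j (j + b'))
        - qint qq ((b' + 1 + i : ℕ)) • (qbase qq i d * qbase qq j (j + b')) := by
  have h1 : C (qint qq (((j + b' : ℕ) : ℤ) + 1)) * qbase qq j (j + b' + 1)
      = qb qq (-(b' : ℤ)) * qbase qq j (j + b') := by
    have h := qbase_bot (j : ℤ) (j + b')
    rw [show (j : ℤ) - ((j + b' : ℕ) : ℤ) = -(b' : ℤ) by push_cast; ring] at h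
    rw [smul_eq_C_mul] at h
    exact h
  have h2 := beta b'
  rw [smul_eq_C_mul] at h2
  have h3 := gamma i d
  have h4 : C (qint qq ((b' + 1 + i : ℕ) : ℤ))
      = C (qint qq ((i : ℤ) + 1)) + C (qq ^ (i + 1) : K) * C (qint qq (b' : ℕ)) := by
    rw [← C_mul, ← C_add]
    congr 1
    have h := qint_add_nat (i + 1) b'
    rw [show ((i + 1 : ℕ) : ℤ) + (b' : ℕ) = ((b' + 1 + i : ℕ) : ℤ) by push_cast; ring] at h
    rw [h]
    push_cast
    ring
  simp only [smul_eq_C_mul, map_mul, map_pow] at h1 h2 h3 h4 ⊢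
  linear_combination (C qq) ^ (b' + i + 1) * qbase qq i d * h1
    + (C qq) ^ (i + 1) * qbase qq i d * qbase qq j (j + b') * h2
    + qbase qq j (j + b') * h3
    + qbase qq i d * qbase qq j (j + b') * h4

lemma PID2 (i j' d : ℕ) :
    (qq ^ (i + 1) * qint qq ((j' : ℕ) + 1)) • (qbase qq i d * qbase qq (j' + 1 : ℕ) (j' + 1))
      = (qq ^ (i + 1) * qint qq ((j' : ℕ) + 1) - qq ^ (j' + 1) * qint qq ((i : ℤ) + 1)) •
          (qbase qq i d * qbase qq j' j')
        + (qq ^ (j' + 1) * qint qq ((d : ℤ) + 1)) •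
          (qbase qq ((i : ℤ) + 1) (d + 1) * qbase qq j' j') := by
  have h1 : C (qint qq ((j' : ℤ) + 1)) * qbase qq (j' + 1 : ℕ) (j' + 1)
      = (C (qint qq (((j' + 1 : ℕ)) : ℤ)) + C (qq ^ (j' + 1) : K) * X) * qbase qq j' j' := by
    have h := qbase_top ((j' + 1 : ℕ) : ℤ) j'
    rw [show ((j' + 1 : ℕ) : ℤ) - 1 = (j' : ℤ) by omega] at h
    rw [smul_eq_C_mul] at h
    rw [h, qb, show (qq : K) ^ (((j' + 1 : ℕ)) : ℤ) = qq ^ (j' + 1 : ℕ) from zpow_natCast qq (j'+1)]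
  have h3 := gamma i d
  have h5 : C (qint qq (((j' + 1 : ℕ)) : ℤ)) = C (qint qq ((j' : ℤ) + 1)) := by
    norm_cast
  simp only [smul_eq_C_mul, map_mul, map_pow, map_sub, map_add] at h1 h3 h5 ⊢
  linear_combination (C qq) ^ (i + 1) * qbase qq i d * h1
    + (C qq) ^ (j' + 1) * qbase qq j' j' * h3
    + (C qq) ^ (i + 1) * qbase qq i d * qbase qq j' j' * h5
-- appended to full.lean for dev
lemma qint_congr {m m' : ℤ} (h : m = m') : qint qq m = qint qq m' := by rw [h]
lemma qfact_congr {n n' : ℕ} (h : n = n') : qfact qq n = qfact qq n' := by rw [h]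
lemma qbase_congr {m m' : ℤ} {n n' : ℕ} (hm : m = m') (hn : n = n') :
    qbase qq m n = qbase qq m' n' := by rw [hm, hn]

lemma zrel (x y : ℕ) : qint qq ((x + y : ℕ)) = qint qq (x : ℕ) + qq ^ x * qint qq (y : ℕ) := by
  have h := qint_add_nat x y
  rw [show ((x : ℤ) + (y : ℕ)) = ((x + y : ℕ) : ℤ) by push_cast; ring] at h
  exact h

lemma S2id (i j' a : ℕ) :
    qq ^ (i+1) * qint qq ((j':ℤ)+1) * qint qq (((a+j' : ℕ):ℤ)+1)
      = (qq ^ (i+1) * qint qq ((j':ℤ)+1) - qq ^ (j'+1) * qint qq ((i:ℤ)+1)) *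
          qint qq (((i+a+j'+1 : ℕ):ℤ)+1)
        + qq ^ (j'+1) * qint qq (((i+a : ℕ):ℤ)+1) * qint qq ((i:ℤ)+1) := by
  have h1 := hq1
  simp only [qint, zpow_add₀ hq, zpow_natCast, zpow_one]
  push_cast
  field_simp
  ring

lemma FIN1 (i j a b' : ℕ) :
    qq ^ b' * (qint qq (((i+a : ℕ) : ℤ)+1) *
        ((-1)^(a+b') * qq^(a*b') * qfact qq (a+j) * qfact qq (b'+(i+1)) *
          (qfact qq (i+1+a+j+b'+1))⁻¹)
      - qint qq ((b'+1+i : ℕ) : ℤ) *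
        ((-1)^(a+b') * qq^(a*b') * qfact qq (a+j) * qfact qq (b'+i) *
          (qfact qq (i+a+j+b'+1))⁻¹))
    = qq ^ (b'+i+1) * qint qq (((j+b' : ℕ) : ℤ)+1) *
      ((-1)^(a+(b'+1)) * qq^(a*(b'+1)) * qfact qq (a+j) * qfact qq (b'+1+i) *
        (qfact qq (i+a+j+(b'+1)+1))⁻¹) := by
  have e1 : qfact qq (b'+(i+1)) = qfact qq (b'+i) * qint qq (((b'+i : ℕ):ℤ)+1) := by
    rw [qfact_congr (show b'+(i+1) = (b'+i)+1 by omega), qfact_succ']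
  have e2 : qfact qq (b'+1+i) = qfact qq (b'+i) * qint qq (((b'+i : ℕ):ℤ)+1) := by
    rw [qfact_congr (show b'+1+i = (b'+i)+1 by omega), qfact_succ']
  have e3 : qfact qq (i+1+a+j+b'+1)
      = qfact qq (i+a+j+b'+1) * qint qq (((i+a+j+b'+1 : ℕ):ℤ)+1) := by
    rw [qfact_congr (show i+1+a+j+b'+1 = (i+a+j+b'+1)+1 by omega), qfact_succ']
  have e4 : qfact qq (i+a+j+(b'+1)+1)
      = qfact qq (i+a+j+b'+1) * qint qq (((i+a+j+b'+1 : ℕ):ℤ)+1) := by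
    rw [qfact_congr (show i+a+j+(b'+1)+1 = (i+a+j+b'+1)+1 by omega), qfact_succ']
  have e5 : qint qq ((b'+1+i : ℕ) : ℤ) = qint qq (((b'+i : ℕ):ℤ)+1) :=
    qint_congr (by push_cast; ring)
  have hz : qint qq (((i+a+j+b'+1 : ℕ):ℤ)+1)
      = qint qq (((i+a : ℕ):ℤ)+1) + qq^(i+a+1) * qint qq (((j+b' : ℕ):ℤ)+1) := by
    have h := zrel (i+a+1) (j+b'+1)
    rw [show qint qq ((i+a+1+(j+b'+1) : ℕ) : ℤ) = qint qq (((i+a+j+b'+1 : ℕ):ℤ)+1) from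
        qint_congr (by push_cast; ring),
      show qint qq ((i+a+1 : ℕ) : ℤ) = qint qq (((i+a : ℕ):ℤ)+1) from
        qint_congr (by push_cast; ring),
      show qint qq ((j+b'+1 : ℕ) : ℤ) = qint qq (((j+b' : ℕ):ℤ)+1) from
        qint_congr (by push_cast; ring)] at h
    exact h
  rw [e1, e2, e3, e4, e5]
  have n1 := qfact_ne_zero (i+a+j+b'+1)
  have n2 := qint_succ_ne_zero (i+a+j+b'+1)
  have n3 := qfact_ne_zero (a+j)
  have n4 := qfact_ne_zero (b'+i)
  have n5 := qint_succ_ne_zero (b'+i)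
  push_cast at n2 n5 hz ⊢
  field_simp
  linear_combination (-((-1)^(a+b')) * qq^(a*b'+b')) * hz

lemma MAIN (S : Polynomial K →ₗ[K] Polynomial K) (hS : IsQSigma S) :
    ∀ e i j a b : ℕ, j + b = e →
    qq ^ (a.choose 2 + b.choose 2) * qV (S (qbase qq i (i + a) * qbase qq j (j + b)))
      = (-1) ^ (a + b) * qq ^ (a * b) * qfact qq (a + j) * qfact qq (b + i)
        * (qfact qq (i + a + j + b + 1))⁻¹ := by
  intro e
  induction e with
  | zero =>
    intro i j a b hjb
    have hj : j = 0 := by omega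
    have hb : b = 0 := by omega
    subst hj; subst hb
    have h0 : qbase qq ((0:ℕ) : ℤ) (0 + 0) = 1 := qbase_zero
    rw [h0, mul_one]
    have ha := anchor S hS i a
    simp only [show Nat.choose 0 2 = 0 from rfl, Nat.add_zero, Nat.zero_add, Nat.mul_zero,
      pow_zero, mul_one] at *
    exact ha
  | succ e ih =>
    intro i j a b hjb
    cases b with
    | zero =>
      obtain ⟨j', rfl⟩ : ∃ j', j = j' + 1 := ⟨e, by omega⟩
      have hP := PID2 i j' (i + a)
      have h5 := congrArg (fun p => qV (S p)) hP
      simp only [map_smul, map_sub, map_add, qV_smul, qV_add, qV_sub, smul_eq_mul] at h5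
      rw [qbase_congr (show (i:ℤ)+1 = ((i+1:ℕ):ℤ) by push_cast; ring)
        (show (i+a)+1 = (i+1)+a by omega)] at h5
      have IH1 := ih (i + 1) j' a 0 (by omega)
      have IH2 := ih i j' a 0 (by omega)
      simp only [show Nat.choose 0 2 = 0 from rfl, Nat.add_zero, Nat.zero_add, Nat.mul_zero,
        pow_zero, mul_one] at IH1 IH2 ⊢
      have hc0 : (qq ^ (i+1) * qint qq ((j':ℤ)+1) : K) ≠ 0 :=
        mul_ne_zero (pow_ne_zero _ hq) (qint_succ_ne_zero j')
      apply mul_left_cancel₀ hc0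
      calc qq ^ (i+1) * qint qq ((j':ℤ)+1) *
            (qq ^ (a.choose 2) * qV (S (qbase qq (↑i) (i + a) * qbase qq (↑(j' + 1)) (j' + 1))))
          = qq ^ (a.choose 2) *
            (qq ^ (i+1) * qint qq ((j':ℤ)+1) *
              qV (S (qbase qq (↑i) (i + a) * qbase qq (↑(j' + 1)) (j' + 1)))) := by ring
        _ = qq ^ (a.choose 2) *
            ((qq ^ (i + 1) * qint qq (↑j' + 1) - qq ^ (j' + 1) * qint qq (↑i + 1)) *
              qV (S (qbase qq (↑i) (i + a) * qbase qq (↑j') j')) +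
            qq ^ (j' + 1) * qint qq (↑(i + a) + 1) *
              qV (S (qbase qq (↑(i + 1)) (i + 1 + a) * qbase qq (↑j') j'))) := by rw [h5]
        _ = (qq ^ (i + 1) * qint qq (↑j' + 1) - qq ^ (j' + 1) * qint qq (↑i + 1)) *
              (qq ^ (a.choose 2) * qV (S (qbase qq (↑i) (i + a) * qbase qq (↑j') j'))) +
            qq ^ (j' + 1) * qint qq (↑(i + a) + 1) *
              (qq ^ (a.choose 2) * qV (S (qbase qq (↑(i + 1)) (i + 1 + a) * qbase qq (↑j') j'))) := by
            ring
        _ = (qq ^ (i + 1) * qint qq (↑j' + 1) - qq ^ (j' + 1) * qint qq (↑i + 1)) *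
              ((-1) ^ a * qfact qq (a + j') * qfact qq i * (qfact qq (i + a + j' + 1))⁻¹) +
            qq ^ (j' + 1) * qint qq (↑(i + a) + 1) *
              ((-1) ^ a * qfact qq (a + j') * qfact qq (i + 1) * (qfact qq (i + 1 + a + j' + 1))⁻¹) := by
            rw [IH1, IH2]
        _ = qq ^ (i+1) * qint qq ((j':ℤ)+1) *
            ((-1) ^ a * qfact qq (a + (j' + 1)) * qfact qq i * (qfact qq (i + a + (j' + 1) + 1))⁻¹) := by
            have hx : qfact qq (a + (j' + 1)) = qfact qq (a + j') * qint qq (((a+j' : ℕ):ℤ)+1) := by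
              rw [qfact_congr (show a + (j'+1) = (a+j') + 1 by omega), qfact_succ']
            have hP1 : qfact qq (i+1+a+j'+1)
                = qfact qq (i+a+j'+1) * qint qq (((i+a+j'+1 : ℕ):ℤ)+1) := by
              rw [qfact_congr (show i+1+a+j'+1 = (i+a+j'+1) + 1 by omega), qfact_succ']
            have hP : qfact qq (i+a+(j'+1)+1)
                = qfact qq (i+a+j'+1) * qint qq (((i+a+j'+1 : ℕ):ℤ)+1) := by
              rw [qfact_congr (show i+a+(j'+1)+1 = (i+a+j'+1) + 1 by omega), qfact_succ']
            have hw : qfact qq (i + 1) = qfact qq i * qint qq ((i:ℤ)+1) := qfact_succ' i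
            rw [hx, hP1, hP, hw]
            have n1 := qfact_ne_zero (i+a+j'+1)
            have n2 := qint_succ_ne_zero (i+a+j'+1)
            have n3 := qfact_ne_zero i
            have n4 := qfact_ne_zero (a+j')
            have hs2 := S2id i j' a
            push_cast at hs2 n2 ⊢
            field_simp
            linear_combination (-1 : K) * hs2
    | succ b' =>
      have hP := PID1 i j b' (i + a)
      have h5 := congrArg (fun p => qV (S p)) hP
      simp only [map_smul, map_sub, qV_smul, qV_sub, smul_eq_mul] at h5
      rw [qbase_congr (show (i:ℤ)+1 = ((i+1:ℕ):ℤ) by push_cast; ring)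
        (show (i+a)+1 = (i+1)+a by omega)] at h5
      have IH1 := ih (i + 1) j a b' (by omega)
      have IH2 := ih i j a b' (by omega)
      rw [show j + (b'+1) = j + b' + 1 from by omega,
        show a.choose 2 + (b'+1).choose 2 = (a.choose 2 + b'.choose 2) + b' from by
          rw [choose_succ_two]; omega,
        pow_add]
      have hc0 : (qq ^ (b'+i+1) * qint qq (((j+b' : ℕ) : ℤ)+1) : K) ≠ 0 :=
        mul_ne_zero (pow_ne_zero _ hq) (qint_succ_ne_zero (j+b'))
      apply mul_left_cancel₀ hc0
      calc qq ^ (b'+i+1) * qint qq (((j+b' : ℕ) : ℤ)+1) *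
            (qq ^ (a.choose 2 + b'.choose 2) * qq ^ b' *
              qV (S (qbase qq (↑i) (i + a) * qbase qq (↑j) (j + b' + 1))))
          = qq ^ (a.choose 2 + b'.choose 2) * qq ^ b' *
            (qq ^ (b'+i+1) * qint qq (((j+b' : ℕ) : ℤ)+1) *
              qV (S (qbase qq (↑i) (i + a) * qbase qq (↑j) (j + b' + 1)))) := by ring
        _ = qq ^ (a.choose 2 + b'.choose 2) * qq ^ b' *
            (qint qq (↑(i + a) + 1) * qV (S (qbase qq (↑(i + 1)) (i + 1 + a) * qbase qq (↑j) (j + b'))) -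
              qint qq ↑(b' + 1 + i) * qV (S (qbase qq (↑i) (i + a) * qbase qq (↑j) (j + b')))) := by
            rw [h5]
        _ = qq ^ b' * (qint qq (↑(i + a) + 1) *
              (qq ^ (a.choose 2 + b'.choose 2) *
                qV (S (qbase qq (↑(i + 1)) (i + 1 + a) * qbase qq (↑j) (j + b')))) -
            qint qq ↑(b' + 1 + i) *
              (qq ^ (a.choose 2 + b'.choose 2) *
                qV (S (qbase qq (↑i) (i + a) * qbase qq (↑j) (j + b'))))) := by ring
        _ = qq ^ b' * (qint qq (↑(i + a) + 1) *
              ((-1) ^ (a + b') * qq ^ (a * b') * qfact qq (a + j) * qfact qq (b' + (i + 1)) *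
                (qfact qq (i + 1 + a + j + b' + 1))⁻¹) -
            qint qq ↑(b' + 1 + i) *
              ((-1) ^ (a + b') * qq ^ (a * b') * qfact qq (a + j) * qfact qq (b' + i) *
                (qfact qq (i + a + j + b' + 1))⁻¹)) := by
            rw [IH1, IH2]
        _ = qq ^ (b'+i+1) * qint qq (((j+b' : ℕ) : ℤ)+1) *
            ((-1) ^ (a + (b' + 1)) * qq ^ (a * (b' + 1)) * qfact qq (a + j) * qfact qq (b' + 1 + i) *
              (qfact qq (i + a + j + (b' + 1) + 1))⁻¹) := FIN1 i j a b'

lemma prodnum : ∀ k M : ℕ, k ≤ M →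
    (∏ r ∈ range k, qint qq ((M:ℤ) - r)) * qfact qq (M - k) = qfact qq M := by
  intro k
  induction k with
  | zero => intro M h; simp
  | succ k ihk =>
    intro M h
    have h1 : qfact qq (M - k) = qfact qq (M - (k+1)) * qint qq ((M:ℤ) - k) := by
      rw [qfact_congr (show M - k = (M - (k+1)) + 1 by omega), qfact_succ']
      congr 1
      apply qint_congr
      push_cast [Nat.cast_sub (show k + 1 ≤ M from h)]
      ring
    have h2 := ihk M (by omega)
    rw [prod_range_succ]
    calc ((∏ r ∈ range k, qint qq ((M:ℤ) - r)) * qint qq ((M:ℤ) - k)) * qfact qq (M - (k+1))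
        = (∏ r ∈ range k, qint qq ((M:ℤ) - r)) * (qfact qq (M - (k+1)) * qint qq ((M:ℤ) - k)) := by
          ring
      _ = (∏ r ∈ range k, qint qq ((M:ℤ) - r)) * qfact qq (M - k) := by rw [← h1]
      _ = qfact qq M := h2

lemma qbinom_fact (M k : ℕ) (hk : k ≤ M) :
    qbinom qq (M : ℤ) k = qfact qq M * (qfact qq k)⁻¹ * (qfact qq (M - k))⁻¹ := by
  unfold qbinom
  have hp := prodnum k M hk
  have h1 : (∏ r ∈ range k, qint qq ((M:ℤ) - r)) = qfact qq M * (qfact qq (M - k))⁻¹ := by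
    rw [← hp]
    field_simp [qfact_ne_zero]
  rw [div_eq_mul_inv, h1]
  ring

lemma qbinom_congr {m m' : ℤ} (n : ℕ) (h : m = m') : qbinom qq m n = qbinom qq m' n := by rw [h]

theorem psi_qbase_product (S : Polynomial K →ₗ[K] Polynomial K) (hS : IsQSigma S)
    (i d j e : ℕ) (hid : i ≤ d) (hje : j ≤ e) :
    qV (S (qbase qq i d * qbase qq j e)) =
      (-1) ^ (d - i + (e - j)) *
        qq ^ (-(((d - i).choose 2 : ℤ)) + ((d - i) * (e - j) : ℤ) - ((e - j).choose 2 : ℤ)) /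
        (qint qq (d + e + 1) * qbinom qq (d + e) (d - i + j)) := by
  obtain ⟨a, rfl⟩ : ∃ a, d = i + a := ⟨d - i, by omega⟩
  obtain ⟨b, rfl⟩ : ∃ b, e = j + b := ⟨e - j, by omega⟩
  have hm := MAIN S hS (j + b) i j a b rfl
  have key : qV (S (qbase qq i (i + a) * qbase qq j (j + b)))
      = (qq ^ (a.choose 2 + b.choose 2))⁻¹ *
        ((-1) ^ (a + b) * qq ^ (a * b) * qfact qq (a + j) * qfact qq (b + i)
          * (qfact qq (i + a + j + b + 1))⁻¹) := by
    rw [← hm, ← mul_assoc, inv_mul_cancel₀ (pow_ne_zero _ hq), one_mul]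
  rw [key]
  rw [show i + a - i = a from by omega, show j + b - j = b from by omega]
  rw [show ((i + a : ℕ) : ℤ) + ((j + b : ℕ) : ℤ) = ((i + a + j + b : ℕ) : ℤ) from by push_cast; ring]
  rw [qbinom_fact (i + a + j + b) (a + j) (by omega)]
  rw [show i + a + j + b - (a + j) = b + i from by omega]
  rw [show (-((a.choose 2 : ℕ) : ℤ) + (((i + a : ℕ) : ℤ) - (i : ℕ)) * (((j + b : ℕ) : ℤ) - (j : ℕ))
        - ((b.choose 2 : ℕ) : ℤ)) = ((a * b : ℕ) : ℤ) - ((a.choose 2 + b.choose 2 : ℕ) : ℤ) from by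
      push_cast; ring]
  rw [zpow_sub₀ hq, zpow_natCast, zpow_natCast]
  rw [qfact_succ' (i + a + j + b)]
  have n1 := qfact_ne_zero (i + a + j + b)
  have n2 := qfact_ne_zero (a + j)
  have n3 := qfact_ne_zero (b + i)
  have n4 := qint_succ_ne_zero (i + a + j + b)
  have n5 : (qq : K) ^ (a.choose 2 + b.choose 2) ≠ 0 := pow_ne_zero _ hq
  field_simp

end
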